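/- Let R ∈ ℝ, r > 0 and V = {s ∈ ℂ : Re s > R and |Im s| < r}. Let g be holomorphic on V with g(s+1) = g(s) for all s ∈ V (note that s ∈ V implies s+1 ∈ V), and suppose g(t) → 0 as t → +∞ along the real axis. Then g vanishes identically on V. -/

import Mathlib

open Filter Topology

/-- The uniqueness step (Res51)–(Res52) of Scholion DSchol:1: a 1-periodic
holomorphic function on a right half-strip tending to `0` along the real axis
vanishes identically. -/
theorem periodic_on_half_strip_vanishing
    (R r : ℝ) (hr : 0 < r) (g : ℂ → ℂ)
    (hd : DifferentiableOn ℂ g {s : ℂ | R < s.re ∧ |s.im| < r})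
    (hper : ∀ s : ℂ, R < s.re → |s.im| < r → g (s + 1) = g s)
    (hlim : Tendsto (fun t : ℝ => g (t : ℂ)) atTop (𝓝 0)) :
    ∀ s : ℂ, R < s.re → |s.im| < r → g s = 0 := by
  set V : Set ℂ := {s : ℂ | R < s.re ∧ |s.im| < r} with hV
  have hopen : IsOpen V := by
    have h1 : IsOpen {s : ℂ | R < s.re} := isOpen_lt continuous_const Complex.continuous_re
    have h2 : IsOpen {s : ℂ | |s.im| < r} :=
      isOpen_lt (continuous_abs.comp Complex.continuous_im) continuous_const
    exact h1.inter h2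
  have hconv : Convex ℝ V := by
    have h1 : Convex ℝ {s : ℂ | R < s.re} := convex_halfSpace_re_gt R
    have h2 : Convex ℝ {s : ℂ | |s.im| < r} := by
      have : {s : ℂ | |s.im| < r} = {s : ℂ | -r < s.im} ∩ {s : ℂ | s.im < r} := by
        ext s; simp [abs_lt, and_comm]
      rw [this]
      exact (convex_halfSpace_im_gt (-r)).inter (convex_halfSpace_im_lt r)
    exact h1.inter h2
  -- step 1: g vanishes at real points t > R
  have hreal : ∀ t : ℝ, R < t → g (t : ℂ) = 0 := by
    intro t ht
    have hmem : ∀ n : ℕ, ((t : ℂ) + n) ∈ V := by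
      intro n
      constructor
      · simp only [Complex.add_re, Complex.ofReal_re, Complex.natCast_re]
        have : (0:ℝ) ≤ n := n.cast_nonneg
        linarith
      · simp only [Complex.add_im, Complex.ofReal_im, Complex.natCast_im, add_zero, abs_zero]
        linarith
    have hper' : ∀ n : ℕ, g ((t : ℂ) + n) = g (t : ℂ) := by
      intro n
      induction n with
      | zero => simp
      | succ k ih =>
        have := hper ((t:ℂ) + k) (hmem k).1 (hmem k).2
        push_cast
        rw [add_assoc] at *
        rw [this, ih]
    have h1 : Tendsto (fun n : ℕ => g ((t : ℂ) + n)) atTop (𝓝 0) := by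
      have hcomp : Tendsto (fun n : ℕ => t + (n : ℝ)) atTop atTop :=
        tendsto_atTop_add_const_left _ _ tendsto_natCast_atTop_atTop
      have := hlim.comp hcomp
      simpa [Function.comp_def, Complex.ofReal_add, Complex.ofReal_natCast] using this
    have h2 : Tendsto (fun n : ℕ => g ((t : ℂ) + n)) atTop (𝓝 (g (t : ℂ))) := by
      simpa [hper'] using (tendsto_const_nhds : Tendsto (fun _ : ℕ => g (t:ℂ)) atTop (𝓝 (g (t:ℂ))))
    exact tendsto_nhds_unique h2 h1
  -- step 2: identity theorem
  have han : AnalyticOnNhd ℂ g V := hd.analyticOnNhd hopen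
  have hz₀ : ((R : ℂ) + 1) ∈ V := by
    constructor <;> simp [hr, abs_of_nonneg]
  have hfreq : ∃ᶠ z in 𝓝[≠] ((R : ℂ) + 1), g z = 0 := by
    have hseq : Tendsto (fun n : ℕ => ((R : ℂ) + 1 + 1 / (n + 1))) atTop
        (𝓝[≠] ((R : ℂ) + 1)) := by
      apply tendsto_nhdsWithin_of_tendsto_nhds_of_eventually_within
      · have : Tendsto (fun n : ℕ => (1 : ℂ) / (n + 1)) atTop (𝓝 0) := by
          have : Tendsto (fun n : ℕ => 1 / ((n : ℝ) + 1)) atTop (𝓝 0) := tendsto_one_div_add_atTop_nhds_zero_nat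
          have h := (Complex.continuous_ofReal.tendsto 0).comp this
          simpa [Function.comp_def] using h
        have := (tendsto_const_nhds (x := (R:ℂ) + 1) (f := atTop)).add this
        simpa using this
      · filter_upwards with n
        simp only [Set.mem_compl_iff, Set.mem_singleton_iff]
        intro h
        have hne : ((n : ℂ) + 1) ≠ 0 := Nat.cast_add_one_ne_zero n
        have hne2 : (1 : ℂ) / (n + 1) ≠ 0 := one_div_ne_zero hne
        apply hne2
        have := congrArg (fun z => z - ((R:ℂ) + 1)) h
        simpa [add_sub_cancel_left] using this
    apply hseq.frequently
    apply Filter.Frequently.of_forall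
    intro n
    have : ((R : ℂ) + 1 + 1 / (n + 1)) = ((R + 1 + 1 / (n + 1) : ℝ) : ℂ) := by
      push_cast
      ring
    rw [this]
    apply hreal
    have h1 : (0:ℝ) < 1 / (n + 1) := by positivity
    linarith
  have := han.eqOn_zero_of_preconnected_of_frequently_eq_zero hconv.isPreconnected hz₀ hfreq
  intro s hsre hsim
  exact this ⟨hsre, hsim⟩
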